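/- arXiv:2402.04604 — 2 statements merged into one kernel-verified Lean document; each statement's English description precedes it below -/
import Mathlib

section
/- For σ ∈ G, the K-subspace A^σ = {φ_{b,σ} : b ∈ L} of the space of symmetric K-bilinear forms on L has K-dimension n if the order of σ is not 2, and K-dimension n/2 if the order of σ is 2. Equivalently, the K-linear map L → A^σ, b ↦ φ_{b,σ}, has kernel {0} when ord(σ) ≠ 2 and kernel {b ∈ L : σ(b) = −b} (of dimension n/2) when ord(σ) = 2. -/
open Module

/-- The symmetric `K`-bilinear form `φ_{b,σ}(x,y) = Tr_{L/K}(b·(x·σ(y) + σ(x)·y))`,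
as a bilinear form `L →ₗ[K] L →ₗ[K] K`.  (Note that
`Tr(b·(x·σ(y) + σ(x)·y)) = Tr((b·x)·σ(y)) + Tr((b·σ(x))·y)`.) -/
noncomputable def phi (K L : Type*) [Field K] [Field L] [Algebra K L]
    (b : L) (σ : L ≃ₐ[K] L) : L →ₗ[K] L →ₗ[K] K :=
  (Algebra.traceForm K L).compl₁₂ (LinearMap.mulLeft K b) σ.toLinearMap +
    (Algebra.traceForm K L).compl₁₂ ((LinearMap.mulLeft K b).comp σ.toLinearMap) LinearMap.id

/-- The `K`-subspace `A^σ = {φ_{b,σ} : b ∈ L}` of the space of bilinear forms on `L`. -/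
noncomputable def Asub (K L : Type*) [Field K] [Field L] [Algebra K L]
    (σ : L ≃ₐ[K] L) : Submodule K (L →ₗ[K] L →ₗ[K] K) :=
  Submodule.span K (Set.range fun b : L => phi K L b σ)


section aux
variable (K L : Type*) [Field K] [Field L] [Algebra K L]

lemma phi_apply (b : L) (σ : L ≃ₐ[K] L) (x y : L) :
    phi K L b σ x y =
      Algebra.trace K L (x * (b * σ y + σ.symm b * σ.symm y)) := by
  have h : Algebra.trace K L ((b * σ x) * y) =
      Algebra.trace K L (x * (σ.symm b * σ.symm y)) := by
    rw [← Algebra.trace_eq_of_algEquiv σ (x * (σ.symm b * σ.symm y))]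
    congr 1
    simp only [map_mul, AlgEquiv.apply_symm_apply]
    ring
  simp only [phi, LinearMap.add_apply, LinearMap.compl₁₂_apply, LinearMap.mulLeft_apply,
    LinearMap.comp_apply, LinearMap.id_apply, AlgEquiv.toLinearMap_apply,
    Algebra.traceForm_apply, h]
  rw [mul_add, map_add]
  ring_nf

noncomputable def psi (σ : L ≃ₐ[K] L) : L →ₗ[K] (L →ₗ[K] L →ₗ[K] K) where
  toFun b := phi K L b σ
  map_add' b b' := by
    ext x y
    simp only [phi_apply, LinearMap.add_apply]
    rw [← map_add]
    congr 1
    rw [map_add]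
    ring
  map_smul' c b := by
    ext x y
    simp only [phi_apply, LinearMap.smul_apply, RingHom.id_apply]
    rw [← map_smul]
    congr 1
    rw [map_smul, smul_mul_assoc, smul_mul_assoc, ← smul_add, mul_smul_comm]

lemma phi_eq_zero_iff [FiniteDimensional K L] [IsGalois K L] (b : L) (σ : L ≃ₐ[K] L) :
    phi K L b σ = 0 ↔ ∀ y : L, b * σ y + σ.symm b * σ.symm y = 0 := by
  constructor
  · intro h y
    apply (traceForm_nondegenerate K L).1
    intro x
    have := congrFun (congrArg (fun f => f x) (congrArg DFunLike.coe h)) y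
    rw [Algebra.traceForm_apply, mul_comm]
    simpa only [phi_apply, LinearMap.zero_apply] using this
  · intro h
    ext x y
    simp [phi_apply, h y]

end aux

set_option maxHeartbeats 1000000 in
/-- For `σ ∈ Gal(L/K)`, the subspace `A^σ` has `K`-dimension `n` if
`ord(σ) ≠ 2` and `K`-dimension `n/2` if `ord(σ) = 2`.  Equivalently, the `K`-linear map
`L → A^σ`, `b ↦ φ_{b,σ}`, has kernel `{0}` when `ord(σ) ≠ 2` and kernel
`{b ∈ L : σ(b) = −b}` (of dimension `n/2`) when `ord(σ) = 2`. -/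
theorem dim_Asub (K L : Type*) [Field K] [Field L] [Algebra K L]
    [FiniteDimensional K L] [IsGalois K L] (h2 : (2 : K) ≠ 0) (σ : L ≃ₐ[K] L) :
    (orderOf σ ≠ 2 →
      finrank K (Asub K L σ) = finrank K L ∧
      ∀ b : L, phi K L b σ = 0 → b = 0) ∧
    (orderOf σ = 2 →
      finrank K (Asub K L σ) = finrank K L / 2 ∧
      (∀ b : L, phi K L b σ = 0 ↔ σ b = -b) ∧
      finrank K (LinearMap.ker (σ.toLinearMap + LinearMap.id)) = finrank K L / 2) := by
  have h2L : (2 : L) ≠ 0 := by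
    intro h
    apply h2
    apply (algebraMap K L).injective
    rw [map_ofNat, map_zero, h]
  have hAr : Asub K L σ = LinearMap.range (psi K L σ) := by
    rw [Asub, ← Submodule.span_eq (LinearMap.range (psi K L σ)), LinearMap.coe_range]
    rfl
  constructor
  · intro hord
    have hker : ∀ b : L, phi K L b σ = 0 → b = 0 := by
      intro b hb
      rw [phi_eq_zero_iff] at hb
      have h1 : σ.symm b = -b := by
        have := hb 1
        simp only [map_one, mul_one] at this
        exact eq_neg_of_add_eq_zero_right this
      by_contra hb0
      have hσeq : ∀ y, σ y = σ.symm y := by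
        intro y
        apply mul_left_cancel₀ hb0
        have := hb y
        rw [h1] at this
        linear_combination this
      have hsq : σ * σ = 1 := by
        apply AlgEquiv.ext
        intro y
        rw [AlgEquiv.mul_apply, AlgEquiv.one_apply, hσeq, AlgEquiv.symm_apply_apply]
      have hdvd : orderOf σ ∣ 2 := orderOf_dvd_of_pow_eq_one (by rw [pow_two]; exact hsq)
      have h1ord : orderOf σ = 1 := by
        rcases (Nat.dvd_prime Nat.prime_two).mp hdvd with h | h
        · exact h
        · exact absurd h hord
      have hone : σ = 1 := orderOf_eq_one_iff.mp h1ord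
      have : σ.symm b = b := by
        apply σ.injective
        rw [AlgEquiv.apply_symm_apply, hone, AlgEquiv.one_apply]
      rw [h1] at this
      apply hb0
      have h2b : (2 : L) * b = 0 := by rw [two_mul]; linear_combination -this
      rcases mul_eq_zero.mp h2b with h | h
      · exact absurd h h2L
      · exact h
    refine ⟨?_, hker⟩
    have hinj : Function.Injective (psi K L σ) := by
      intro b b' h
      have e : ∀ x y, phi K L b σ x y = phi K L b' σ x y := fun x y => by
        have := congrArg (fun g : L →ₗ[K] L →ₗ[K] K => g x y) h
        exact this
      have hb : phi K L (b - b') σ = 0 := by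
        ext x y
        have := e x y
        rw [phi_apply, phi_apply] at this
        rw [phi_apply, LinearMap.zero_apply, map_sub,
          show x * ((b - b') * σ y + (σ.symm b - σ.symm b') * σ.symm y) =
            x * (b * σ y + σ.symm b * σ.symm y) - x * (b' * σ y + σ.symm b' * σ.symm y) by ring,
          map_sub, this, sub_self]
        rfl
      exact sub_eq_zero.mp (hker _ hb)
    rw [hAr]
    exact LinearMap.finrank_range_of_inj hinj
  · intro hord
    have hsq : σ * σ = 1 := by
      have := pow_orderOf_eq_one σ
      rwa [hord, pow_two] at this
    have hσσ : ∀ x, σ (σ x) = x := by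
      intro x
      have := DFunLike.congr_fun hsq x
      simpa [AlgEquiv.mul_apply] using this
    have hsymm : ∀ x, σ.symm x = σ x := by
      intro x
      apply σ.injective
      rw [AlgEquiv.apply_symm_apply, hσσ]
    have hiff : ∀ b : L, phi K L b σ = 0 ↔ σ b = -b := by
      intro b
      rw [phi_eq_zero_iff]
      constructor
      · intro hb
        have := hb 1
        simp only [map_one, mul_one, hsymm] at this
        exact eq_neg_of_add_eq_zero_right this
      · intro hb y
        rw [hsymm, hsymm, hb]
        ring
    set f := σ.toLinearMap with hf
    have hkerψ : LinearMap.ker (psi K L σ) = LinearMap.ker (f + LinearMap.id) := by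
      ext b
      simp only [LinearMap.mem_ker, LinearMap.add_apply, LinearMap.id_apply, hf,
        AlgEquiv.toLinearMap_apply]
      rw [show (psi K L σ) b = phi K L b σ from rfl, hiff b, add_eq_zero_iff_eq_neg]
    have hmem_m : ∀ x : L, x ∈ LinearMap.ker (f + LinearMap.id) ↔ σ x = -x := by
      intro x
      simp only [LinearMap.mem_ker, LinearMap.add_apply, LinearMap.id_apply, hf,
        AlgEquiv.toLinearMap_apply, add_eq_zero_iff_eq_neg]
    have hmem_p : ∀ x : L, x ∈ LinearMap.ker (f - LinearMap.id) ↔ σ x = x := by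
      intro x
      simp only [LinearMap.mem_ker, LinearMap.sub_apply, LinearMap.id_apply, hf,
        AlgEquiv.toLinearMap_apply, sub_eq_zero]
    have hrange : LinearMap.range (f + LinearMap.id) = LinearMap.ker (f - LinearMap.id) := by
      apply le_antisymm
      · rintro _ ⟨x, rfl⟩
        rw [hmem_p]
        simp only [LinearMap.add_apply, LinearMap.id_apply, hf, AlgEquiv.toLinearMap_apply,
          map_add, hσσ]
        ring
      · intro x hx
        rw [hmem_p] at hx
        refine ⟨(2 : K)⁻¹ • x, ?_⟩
        simp only [LinearMap.add_apply, LinearMap.id_apply, hf, AlgEquiv.toLinearMap_apply,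
          map_smul, hx, ← smul_add]
        rw [← two_smul K x, smul_smul, inv_mul_cancel₀ h2, one_smul]
    -- existence of c with σ c = -c, c ≠ 0
    have hne1 : σ ≠ 1 := by
      intro h
      rw [h, orderOf_one] at hord
      norm_num at hord
    obtain ⟨a, ha⟩ : ∃ a : L, σ a ≠ a := by
      by_contra h
      push_neg at h
      exact hne1 (AlgEquiv.ext fun x => by rw [h x, AlgEquiv.one_apply])
    set c := a - σ a with hcdef
    have hc0 : c ≠ 0 := sub_ne_zero.mpr (fun h => ha h.symm)
    have hσc : σ c = -c := by
      rw [hcdef, map_sub, hσσ]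
      ring
    have key : ∀ p q : Submodule K L, (∀ x ∈ p, c * x ∈ q) →
        finrank K p ≤ finrank K q := by
      intro p q hpq
      have hinj : Function.Injective (LinearMap.mulLeft K c) := by
        intro x y hxy
        exact mul_left_cancel₀ hc0 hxy
      have h1 : finrank K p = finrank K (Submodule.map (LinearMap.mulLeft K c) p) :=
        (Submodule.equivMapOfInjective _ hinj p).finrank_eq
      have h2 : Submodule.map (LinearMap.mulLeft K c) p ≤ q := by
        rintro _ ⟨x, hx, rfl⟩
        exact hpq x hx
      rw [h1]
      exact Submodule.finrank_mono h2
    have heq : finrank K (LinearMap.ker (f - LinearMap.id)) =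
        finrank K (LinearMap.ker (f + LinearMap.id)) := by
      apply le_antisymm
      · apply key
        intro x hx
        rw [hmem_p] at hx
        rw [hmem_m, map_mul, hσc, hx]
        ring
      · apply key
        intro x hx
        rw [hmem_m] at hx
        rw [hmem_p, map_mul, hσc, hx]
        ring
    have hrn : finrank K (LinearMap.ker (f - LinearMap.id)) +
        finrank K (LinearMap.ker (f + LinearMap.id)) = finrank K L := by
      have := (f + LinearMap.id).finrank_range_add_finrank_ker
      rwa [hrange] at this
    have hd : finrank K (LinearMap.ker (f + LinearMap.id)) = finrank K L / 2 := by
      omega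
    refine ⟨?_, hiff, hd⟩
    have hrnψ := LinearMap.finrank_range_add_finrank_ker (K := K) (V := L) (V₂ := L →ₗ[K] L →ₗ[K] K) (psi K L σ)
    rw [hkerψ] at hrnψ
    rw [hAr]
    omega
end

section
/- Suppose n = [L:K] is even and G = {τ_1, …, τ_k, 1, σ_1, σ_1⁻¹, …, σ_m, σ_m⁻¹} is a listing of G without repetitions, where τ_1, …, τ_k are exactly the involutions of G and σ_0 = 1. Then Sym_K(L) is the internal direct sum A^{τ_1} ⊕ ⋯ ⊕ A^{τ_k} ⊕ A^{σ_0} ⊕ A^{σ_1} ⊕ ⋯ ⊕ A^{σ_m}, where each A^{τ_i} has K-dimension n/2 and every nonzero form in A^{τ_i} is nondegenerate, and each A^{σ_j} has K-dimension n. -/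
set_option linter.unusedSectionVars false


open Module

/-- `Sym_K(L)`: the `K`-subspace of symmetric bilinear forms on `L`. -/
def symSubmodule (K L : Type*) [Field K] [Field L] [Algebra K L] :
    Submodule K (L →ₗ[K] L →ₗ[K] K) where
  carrier := {B | ∀ x y : L, B x y = B y x}
  add_mem' := by
    intro B C hB hC x y
    simp [hB x y, hC x y]
  zero_mem' := by intro x y; simp
  smul_mem' := by
    intro c B hB x y
    simp [hB x y]

section aux
variable (K L : Type*) [Field K] [Field L] [Algebra K L]

lemma mem_symSubmodule {B : L →ₗ[K] L →ₗ[K] K} :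
    B ∈ symSubmodule K L ↔ ∀ x y : L, B x y = B y x := Iff.rfl

lemma algequiv_apply_inv (σ : L ≃ₐ[K] L) (x : L) : σ (σ⁻¹ x) = x := σ.apply_symm_apply x
lemma algequiv_inv_apply (σ : L ≃ₐ[K] L) (x : L) : σ⁻¹ (σ x) = x := σ.symm_apply_apply x

/-- The bilinear form `(x,y) ↦ Tr(x * (c * σ y))`. -/
noncomputable def Bf (c : L) (σ : L ≃ₐ[K] L) : L →ₗ[K] L →ₗ[K] K :=
  (Algebra.traceForm K L).compl₂ ((LinearMap.mulLeft K c).comp σ.toLinearMap)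

lemma Bf_apply (c : L) (σ : L ≃ₐ[K] L) (x y : L) :
    Bf K L c σ x y = Algebra.trace K L (x * (c * σ y)) := rfl

/-- `Bf` as a linear map in `c`. -/
noncomputable def BfL (σ : L ≃ₐ[K] L) : L →ₗ[K] (L →ₗ[K] L →ₗ[K] K) where
  toFun c := Bf K L c σ
  map_add' c c' := by
    ext x y
    simp only [Bf_apply, LinearMap.add_apply]
    rw [← map_add]
    congr 1
    ring
  map_smul' a c := by
    ext x y
    simp only [Bf_apply, RingHom.id_apply, LinearMap.smul_apply]
    rw [← map_smul]
    congr 1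
    rw [Algebra.smul_def, Algebra.smul_def]
    ring

@[simp] lemma BfL_apply (σ : L ≃ₐ[K] L) (c : L) : BfL K L σ c = Bf K L c σ := rfl

lemma phi_eq_Bf_add_flip (b : L) (σ : L ≃ₐ[K] L) :
    phi K L b σ = Bf K L b σ + (Bf K L b σ).flip := by
  ext x y
  simp only [phi, Bf_apply, LinearMap.add_apply, LinearMap.compl₁₂_apply,
    LinearMap.flip_apply, Algebra.traceForm_apply, LinearMap.mulLeft_apply,
    LinearMap.comp_apply, LinearMap.id_apply, AlgEquiv.toLinearMap_apply]
  rw [show b * x * σ y = x * (b * σ y) by ring, show b * σ x * y = y * (b * σ x) by ring]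

lemma Bf_flip (c : L) (σ : L ≃ₐ[K] L) :
    (Bf K L c σ).flip = Bf K L (σ⁻¹ c) σ⁻¹ := by
  ext x y
  simp only [LinearMap.flip_apply, Bf_apply]
  rw [← Algebra.trace_eq_of_algEquiv σ (x * (σ⁻¹ c * σ⁻¹ y))]
  congr 1
  simp only [map_mul, algequiv_apply_inv]
  ring

lemma phi_symm (b : L) (σ : L ≃ₐ[K] L) (x y : L) :
    phi K L b σ x y = phi K L b σ y x := by
  rw [phi_eq_Bf_add_flip]
  simp only [LinearMap.add_apply, LinearMap.flip_apply]
  rw [add_comm]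

variable [FiniteDimensional K L] [IsGalois K L]

noncomputable local instance : DecidableEq (L ≃ₐ[K] L) := Classical.decEq _

/-- The assembly map `(G → L) → Bil(L)`, `c ↦ ∑_σ Bf (c σ) σ`. -/
noncomputable def Theta : ((L ≃ₐ[K] L) → L) →ₗ[K] (L →ₗ[K] L →ₗ[K] K) :=
  ∑ σ : L ≃ₐ[K] L, (BfL K L σ).comp (LinearMap.proj σ)

lemma Theta_apply (c : (L ≃ₐ[K] L) → L) :
    Theta K L c = ∑ σ : L ≃ₐ[K] L, Bf K L (c σ) σ := by
  simp [Theta, LinearMap.sum_apply]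

lemma Theta_single (σ : L ≃ₐ[K] L) (b : L) :
    Theta K L (Pi.single σ b) = Bf K L b σ := by
  rw [Theta_apply, Finset.sum_eq_single σ]
  · simp
  · intro σ' _ hne
    rw [Pi.single_eq_of_ne hne, ← BfL_apply, map_zero]
  · intro h; exact absurd (Finset.mem_univ σ) h

lemma Theta_injective : Function.Injective (Theta K L) := by
  rw [injective_iff_map_eq_zero]
  intro c hc
  have h2 : ∀ y, ∑ σ : L ≃ₐ[K] L, c σ * σ y = 0 := by
    intro y
    apply (traceForm_nondegenerate K L).1
    intro x
    have hx : Theta K L c x y = 0 := by rw [hc]; rfl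
    rw [Theta_apply] at hx
    simp only [LinearMap.sum_apply, Bf_apply] at hx
    rw [Algebra.traceForm_apply, Finset.sum_mul, ← hx, ← map_sum]
    congr 1
    exact Finset.sum_congr rfl fun σ _ => by ring
  have li : LinearIndependent L (fun σ : L ≃ₐ[K] L => (σ : L → L)) := by
    have h := (linearIndependent_monoidHom L L).comp
      (fun σ : L ≃ₐ[K] L => (σ : L →* L))
      (fun a b hab => by
        ext x
        exact DFunLike.congr_fun hab x)
    exact h
  funext σ
  exact Fintype.linearIndependent_iff.mp li c
    (funext fun y => by simpa [smul_eq_mul] using h2 y) σ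

lemma Theta_bijective : Function.Bijective (Theta K L) := by
  refine ⟨Theta_injective K L, ?_⟩
  refine (LinearMap.injective_iff_surjective_of_finrank_eq_finrank (K := K) (V := (L ≃ₐ[K] L) → L)
    (V₂ := L →ₗ[K] L →ₗ[K] K) ?_ (f := Theta K L)).mp ?_
  swap
  · exact Theta_injective K L
  · rw [Module.finrank_pi_fintype, Module.finrank_linearMap, Module.finrank_linearMap,
      finrank_self, mul_one]
    simp [Finset.sum_const, ← Nat.card_eq_fintype_card, IsGalois.card_aut_eq_finrank]

/-- The map `b ↦ single σ b + single σ⁻¹ (σ⁻¹ b)`. -/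
noncomputable def gmap (σ : L ≃ₐ[K] L) : L →ₗ[K] ((L ≃ₐ[K] L) → L) :=
  LinearMap.single K (fun _ => L) σ +
    (LinearMap.single K (fun _ => L) σ⁻¹).comp (σ⁻¹ : L ≃ₐ[K] L).toLinearMap

lemma gmap_apply (σ : L ≃ₐ[K] L) (b : L) :
    gmap K L σ b = Pi.single σ b + Pi.single σ⁻¹ (σ⁻¹ b) := rfl

lemma gmap_support (σ : L ≃ₐ[K] L) (b : L) (ρ : L ≃ₐ[K] L)
    (h1 : ρ ≠ σ) (h2 : ρ ≠ σ⁻¹) : gmap K L σ b ρ = 0 := by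
  rw [gmap_apply]
  simp [Pi.single_eq_of_ne h1, Pi.single_eq_of_ne h2]

lemma phi_eq_Theta (b : L) (σ : L ≃ₐ[K] L) :
    phi K L b σ = Theta K L (gmap K L σ b) := by
  rw [gmap_apply, map_add, Theta_single, Theta_single, phi_eq_Bf_add_flip, Bf_flip]

lemma phi_inv (b : L) (σ : L ≃ₐ[K] L) :
    phi K L b σ⁻¹ = phi K L (σ b) σ := by
  rw [phi_eq_Theta, phi_eq_Theta, gmap_apply, gmap_apply, inv_inv,
    algequiv_inv_apply]
  exact congrArg _ (add_comm _ _)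

lemma Asub_eq (σ : L ≃ₐ[K] L) :
    Asub K L σ = Submodule.map (Theta K L) (LinearMap.range (gmap K L σ)) := by
  rw [Asub, ← LinearMap.range_comp]
  have h : (Set.range fun b => phi K L b σ)
      = ↑(LinearMap.range ((Theta K L).comp (gmap K L σ))) := by
    ext B
    simp only [Set.mem_range, SetLike.mem_coe, LinearMap.mem_range, LinearMap.comp_apply]
    exact exists_congr fun b => by rw [phi_eq_Theta]
  rw [h, Submodule.span_eq]

lemma finrank_Asub (σ : L ≃ₐ[K] L) :
    finrank K (Asub K L σ) = finrank K (LinearMap.range (gmap K L σ)) := by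
  rw [Asub_eq]
  exact (Submodule.equivMapOfInjective _ (Theta_injective K L) _).finrank_eq.symm

lemma tau_tau {τ : L ≃ₐ[K] L} (hτ : orderOf τ = 2) (x : L) : τ (τ x) = x := by
  have h := pow_orderOf_eq_one τ
  rw [hτ, sq] at h
  calc τ (τ x) = (τ * τ) x := rfl
  _ = x := by rw [h]; rfl

lemma tau_inv {τ : L ≃ₐ[K] L} (hτ : orderOf τ = 2) : τ⁻¹ = τ := by
  have h := pow_orderOf_eq_one τ
  rw [hτ, sq] at h
  exact inv_eq_of_mul_eq_one_right h |>.symm ▸ rfl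

lemma two_ne_zero_L (h2 : (2 : K) ≠ 0) : (2 : L) ≠ 0 := fun h =>
  h2 <| (algebraMap K L).injective (by rw [map_ofNat, map_zero, h])

lemma finrank_range_one_add_tau (h2 : (2 : K) ≠ 0) {τ : L ≃ₐ[K] L} (hτ : orderOf τ = 2) :
    2 * finrank K (LinearMap.range (LinearMap.id + τ.toLinearMap : L →ₗ[K] L))
      = finrank K L := by
  set h : L →ₗ[K] L := LinearMap.id + τ.toLinearMap with hh
  set Q : Submodule K L := LinearMap.ker (τ.toLinearMap - LinearMap.id) with hQ
  set P : Submodule K L := LinearMap.ker (τ.toLinearMap + LinearMap.id) with hP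
  have h2L : (2 : L) ≠ 0 := two_ne_zero_L K L h2
  have hrange : LinearMap.range h = Q := by
    apply le_antisymm
    · rintro _ ⟨b, rfl⟩
      simp only [hQ, LinearMap.mem_ker, LinearMap.sub_apply, LinearMap.id_apply,
        hh, LinearMap.add_apply, AlgEquiv.toLinearMap_apply, map_add, tau_tau K L hτ]
      ring
    · intro c hc
      have hfix : τ c = c := by
        have := hc
        simp only [hQ, LinearMap.mem_ker, LinearMap.sub_apply, LinearMap.id_apply,
          AlgEquiv.toLinearMap_apply, sub_eq_zero] at this
        exact this
      refine ⟨(2 : L)⁻¹ * c, ?_⟩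
      simp only [hh, LinearMap.add_apply, LinearMap.id_apply, AlgEquiv.toLinearMap_apply,
        map_mul, map_inv₀, map_ofNat, hfix]
      field_simp
      ring
  have hker : LinearMap.ker h = P := by
    rw [hh, hP, add_comm]
  obtain ⟨a, ha⟩ : ∃ a, τ a ≠ a := by
    by_contra hall
    push_neg at hall
    have : τ = 1 := AlgEquiv.ext hall
    rw [this, orderOf_one] at hτ
    omega
  set u := a - τ a with hu
  have hu0 : u ≠ 0 := sub_ne_zero.mpr (Ne.symm ha)
  have hτu : τ u = -u := by
    simp only [hu, map_sub, tau_tau K L hτ]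
    ring
  have hinj : Function.Injective (LinearMap.mulLeft K u) := fun x y hxy => by
    simpa using mul_left_cancel₀ hu0 hxy
  have hPQ : finrank K P = finrank K Q := by
    have hmapP : Submodule.map (LinearMap.mulLeft K u) P ≤ Q := by
      rintro _ ⟨x, hx, rfl⟩
      have hτx : τ x = -x := by
        simpa [hP, LinearMap.mem_ker, add_eq_zero_iff_eq_neg] using hx
      simp only [hQ, LinearMap.mem_ker, LinearMap.sub_apply, LinearMap.id_apply,
        AlgEquiv.toLinearMap_apply, LinearMap.mulLeft_apply, map_mul, hτu, hτx]
      ring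
    have hmapQ : Submodule.map (LinearMap.mulLeft K u) Q ≤ P := by
      rintro _ ⟨x, hx, rfl⟩
      have hτx : τ x = x := by
        simpa [hQ, LinearMap.mem_ker, sub_eq_zero] using hx
      simp only [hP, LinearMap.mem_ker, LinearMap.add_apply, LinearMap.id_apply,
        AlgEquiv.toLinearMap_apply, LinearMap.mulLeft_apply, map_mul, hτu, hτx]
      ring
    have h1 : finrank K P ≤ finrank K Q := by
      rw [(Submodule.equivMapOfInjective _ hinj P).finrank_eq]
      exact Submodule.finrank_mono hmapP
    have h1' : finrank K Q ≤ finrank K P := by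
      rw [(Submodule.equivMapOfInjective _ hinj Q).finrank_eq]
      exact Submodule.finrank_mono hmapQ
    omega
  have hrn := LinearMap.finrank_range_add_finrank_ker h
  rw [hrange, hker, hPQ] at hrn
  rw [hrange]
  omega

lemma finrank_range_gmap_invol [IsGalois K L] (h2 : (2 : K) ≠ 0) {τ : L ≃ₐ[K] L}
    (hτ : orderOf τ = 2) :
    2 * finrank K (LinearMap.range (gmap K L τ)) = finrank K L := by
  have hcomp : gmap K L τ
      = (LinearMap.single K (fun _ => L) τ).comp (LinearMap.id + τ.toLinearMap) := by
    apply LinearMap.ext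
    intro b
    rw [gmap_apply, tau_inv K L hτ]
    simp only [LinearMap.comp_apply, LinearMap.add_apply, LinearMap.id_apply,
      AlgEquiv.toLinearMap_apply, LinearMap.coe_single]
    rw [Pi.single_add]
  have hsinj : Function.Injective (LinearMap.single K (fun _ : L ≃ₐ[K] L => L) τ) := by
    intro x y hxy
    have := congrFun hxy τ
    simpa using this
  rw [hcomp, LinearMap.range_comp,
    ← (Submodule.equivMapOfInjective _ hsinj _).finrank_eq]
  exact finrank_range_one_add_tau K L h2 hτ

lemma gmap_injective_one [IsGalois K L] (h2 : (2 : K) ≠ 0) :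
    Function.Injective (gmap K L (1 : L ≃ₐ[K] L)) := by
  rw [injective_iff_map_eq_zero]
  intro b hb
  have := congrFun hb (1 : L ≃ₐ[K] L)
  rw [gmap_apply, inv_one] at this
  simp only [Pi.add_apply, Pi.single_eq_same, AlgEquiv.one_apply, Pi.zero_apply] at this
  have h2L : (2 : L) ≠ 0 := two_ne_zero_L K L h2
  have : (2 : L) * b = 0 := by rw [two_mul]; exact this
  rcases mul_eq_zero.mp this with h | h
  · exact absurd h h2L
  · exact h

lemma gmap_injective_noninv [IsGalois K L] {σ : L ≃ₐ[K] L} (hσ : σ ≠ σ⁻¹) :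
    Function.Injective (gmap K L σ) := by
  rw [injective_iff_map_eq_zero]
  intro b hb
  have := congrFun hb σ
  rw [gmap_apply] at this
  simp only [Pi.add_apply, Pi.single_eq_same, Pi.zero_apply] at this
  rwa [Pi.single_eq_of_ne hσ, add_zero] at this


end aux

/-- Suppose `n = [L:K]` is even and
`G = {τ_1, …, τ_k, 1, σ_1, σ_1⁻¹, …, σ_m, σ_m⁻¹}` is a listing of `G` without repetitions,
where `τ_1, …, τ_k` are exactly the involutions of `G` and `σ_0 = 1`.  Then `Sym_K(L)` is
the internal direct sum `A^{τ_1} ⊕ ⋯ ⊕ A^{τ_k} ⊕ A^{σ_0} ⊕ A^{σ_1} ⊕ ⋯ ⊕ A^{σ_m}`, where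
each `A^{τ_i}` has `K`-dimension `n/2` and every nonzero form in `A^{τ_i}` is
nondegenerate, and each `A^{σ_j}` has `K`-dimension `n`. -/
theorem sym_direct_sum_even (K L : Type*) [Field K] [Field L] [Algebra K L]
    [FiniteDimensional K L] [IsGalois K L] (h2 : (2 : K) ≠ 0)
    (n k m : ℕ) (hn : finrank K L = n) (hneven : Even n)
    (τs : Fin k → (L ≃ₐ[K] L)) (σs : Fin (m + 1) → (L ≃ₐ[K] L)) (hσ0 : σs 0 = 1)
    (hτord : ∀ i, orderOf (τs i) = 2)
    (hτall : ∀ τ : L ≃ₐ[K] L, orderOf τ = 2 → ∃ i, τ = τs i)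
    (hτinj : Function.Injective τs)
    (hcover : ∀ τ : L ≃ₐ[K] L, (∃ i, τ = τs i) ∨ ∃ j, τ = σs j ∨ τ = (σs j)⁻¹)
    (hσinj : ∀ i j : Fin (m + 1), (σs i = σs j ∨ σs i = (σs j)⁻¹) → i = j)
    (hσnoninv : ∀ j, j ≠ 0 → σs j ≠ (σs j)⁻¹) :
    iSupIndep (Sum.elim (fun i => Asub K L (τs i)) (fun j => Asub K L (σs j)) :
        Fin k ⊕ Fin (m + 1) → Submodule K (L →ₗ[K] L →ₗ[K] K)) ∧
    (⨆ p : Fin k ⊕ Fin (m + 1),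
        Sum.elim (fun i => Asub K L (τs i)) (fun j => Asub K L (σs j)) p) =
      symSubmodule K L ∧
    (∀ i, finrank K (Asub K L (τs i)) = n / 2) ∧
    (∀ i, ∀ B ∈ Asub K L (τs i), B ≠ 0 → ∀ x : L, (∀ y : L, B x y = 0) → x = 0) ∧
    (∀ j, finrank K (Asub K L (σs j)) = n) := by
  classical
  have hτinv : ∀ i, (τs i)⁻¹ = τs i := fun i => tau_inv K L (hτord i)
  set F : Fin k ⊕ Fin (m + 1) → (L ≃ₐ[K] L) := Sum.elim τs σs with hF
  have hfam : (Sum.elim (fun i => Asub K L (τs i)) (fun j => Asub K L (σs j)) :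
      Fin k ⊕ Fin (m + 1) → Submodule K (L →ₗ[K] L →ₗ[K] K))
      = fun p => Asub K L (F p) := by
    funext p; cases p <;> rfl
  -- pairwise disjointness of the inverse-pairs
  have hστ : ∀ i j, τs i ≠ σs j ∧ τs i ≠ (σs j)⁻¹ := by
    intro i j
    by_cases hj : j = 0
    · subst hj
      rw [hσ0, inv_one]
      have h1 : τs i ≠ 1 := by
        intro h
        have := hτord i
        rw [h, orderOf_one] at this
        omega
      exact ⟨h1, h1⟩
    · constructor
      · intro h
        exact hσnoninv j hj (by rw [← h, hτinv i])
      · intro h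
        apply hσnoninv j hj
        calc σs j = (τs i)⁻¹ := by rw [h, inv_inv]
        _ = τs i := hτinv i
        _ = (σs j)⁻¹ := h
  have key : ∀ (p q : Fin k ⊕ Fin (m + 1)) (ρ : L ≃ₐ[K] L),
      (ρ = F p ∨ ρ = (F p)⁻¹) → (ρ = F q ∨ ρ = (F q)⁻¹) → p = q := by
    intro p q ρ h1 h2
    cases p with
    | inl i =>
      rw [show F (Sum.inl i) = τs i from rfl, hτinv i, or_self] at h1
      cases q with
      | inl i' =>
        rw [show F (Sum.inl i') = τs i' from rfl, hτinv i', or_self] at h2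
        exact congrArg Sum.inl (hτinj (h1 ▸ h2 : τs i = τs i'))
      | inr j =>
        rw [show F (Sum.inr j) = σs j from rfl] at h2
        rcases h2 with h2 | h2
        · exact absurd (h1 ▸ h2) (hστ i j).1
        · exact absurd (h1 ▸ h2) (hστ i j).2
    | inr j =>
      rw [show F (Sum.inr j) = σs j from rfl] at h1
      cases q with
      | inl i =>
        rw [show F (Sum.inl i) = τs i from rfl, hτinv i, or_self] at h2
        rcases h1 with h1 | h1
        · exact absurd (h2 ▸ h1) (hστ i j).1
        · exact absurd (h2 ▸ h1) (hστ i j).2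
      | inr j' =>
        rw [show F (Sum.inr j') = σs j' from rfl] at h2
        refine congrArg Sum.inr ?_
        rcases h1 with h1 | h1 <;> rcases h2 with h2 | h2
        · exact hσinj j j' (Or.inl (h1 ▸ h2))
        · exact hσinj j j' (Or.inr (h1 ▸ h2))
        · exact (hσinj j' j (Or.inr (h2 ▸ h1))).symm
        · exact hσinj j j' (Or.inl (inv_injective (h1 ▸ h2)))
  -- independence in the coordinate model
  have hZ : iSupIndep (fun p : Fin k ⊕ Fin (m + 1) =>
      LinearMap.range (gmap K L (F p))) := by
    rw [iSupIndep_def]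
    intro p
    rw [Submodule.disjoint_def]
    intro f hfp hfsup
    have hvan : ∀ ρ : L ≃ₐ[K] L, (ρ = F p ∨ ρ = (F p)⁻¹) → f ρ = 0 := by
      intro ρ hρ
      have hle : (⨆ q, ⨆ (_ : q ≠ p), LinearMap.range (gmap K L (F q)))
          ≤ LinearMap.ker (LinearMap.proj (R := K) (φ := fun _ : L ≃ₐ[K] L => L) ρ) := by
        refine iSup₂_le fun q hq => ?_
        rintro _ ⟨b, rfl⟩
        simp only [LinearMap.mem_ker, LinearMap.proj_apply]
        refine gmap_support K L (F q) b ρ ?_ ?_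
        · exact fun h => hq (key q p ρ (Or.inl h) hρ)
        · exact fun h => hq (key q p ρ (Or.inr h) hρ)
      have := hle hfsup
      simpa using this
    obtain ⟨b, rfl⟩ := hfp
    funext ρ
    show gmap K L (F p) b ρ = 0
    by_cases h1 : ρ = F p ∨ ρ = (F p)⁻¹
    · exact hvan ρ h1
    · push_neg at h1
      exact gmap_support K L _ b ρ h1.1 h1.2
  -- transfer through the linear equivalence
  let E : ((L ≃ₐ[K] L) → L) ≃ₗ[K] (L →ₗ[K] L →ₗ[K] K) :=
    LinearEquiv.ofBijective _ (Theta_bijective K L)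
  have hAm : ∀ σ : L ≃ₐ[K] L,
      Asub K L σ = Submodule.orderIsoMapComap E (LinearMap.range (gmap K L σ)) := by
    intro σ
    rw [Asub_eq]
    ext B
    simp only [Submodule.orderIsoMapComap_apply', Submodule.mem_comap, Submodule.mem_map]
    constructor
    · rintro ⟨f, hf, rfl⟩
      have : E.symm (Theta K L f) = f := E.symm_apply_apply f
      convert hf using 1
      exact this
    · intro hf
      exact ⟨E.symm B, hf, E.apply_symm_apply B⟩
  have hindep : iSupIndep (fun p => Asub K L (F p)) := by
    have h := (iSupIndep_map_orderIso_iff (Submodule.orderIsoMapComap E)).mpr hZ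
    have hfun : (fun p => Asub K L (F p))
        = fun p => Submodule.orderIsoMapComap E (LinearMap.range (gmap K L (F p))) :=
      funext fun p => hAm (F p)
    rw [hfun]
    exact h
  refine ⟨?_, ?_, ?_, ?_, ?_⟩
  · rw [hfam]; exact hindep
  · rw [hfam]
    apply le_antisymm
    · refine iSup_le fun p => ?_
      refine Submodule.span_le.mpr ?_
      rintro _ ⟨b, rfl⟩
      exact phi_symm K L b (F p)
    · intro B hB
      obtain ⟨c, rfl⟩ := (Theta_bijective K L).2 B
      have hBflip : (Theta K L c).flip = Theta K L c := by
        ext x y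
        simp only [LinearMap.flip_apply]
        exact hB y x
      have hsum : (2 : K) • Theta K L c = ∑ σ : L ≃ₐ[K] L, phi K L (c σ) σ := by
        rw [two_smul]
        conv_lhs => rw [show Theta K L c + Theta K L c
          = Theta K L c + (Theta K L c).flip by rw [hBflip]]
        rw [Theta_apply,
          show (∑ σ : L ≃ₐ[K] L, Bf K L (c σ) σ).flip
            = ∑ σ : L ≃ₐ[K] L, (Bf K L (c σ) σ).flip from map_sum (LinearMap.lflip (R₀ := K)) _ _,
          ← Finset.sum_add_distrib]
        exact Finset.sum_congr rfl fun σ _ => (phi_eq_Bf_add_flip K L (c σ) σ).symm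
      have hmem : ∀ σ : L ≃ₐ[K] L, phi K L (c σ) σ ∈ ⨆ p, Asub K L (F p) := by
        intro σ
        rcases hcover σ with ⟨i, rfl⟩ | ⟨j, hj | hj⟩
        · exact Submodule.mem_iSup_of_mem (Sum.inl i) (Submodule.subset_span ⟨_, rfl⟩)
        · subst hj
          exact Submodule.mem_iSup_of_mem (Sum.inr j) (Submodule.subset_span ⟨_, rfl⟩)
        · subst hj
          rw [phi_inv]
          exact Submodule.mem_iSup_of_mem (Sum.inr j) (Submodule.subset_span ⟨_, rfl⟩)
      have hrw : Theta K L c = (2 : K)⁻¹ • ((2 : K) • Theta K L c) := by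
        rw [smul_smul, inv_mul_cancel₀ h2, one_smul]
      rw [hrw, hsum]
      exact Submodule.smul_mem _ _ (Submodule.sum_mem _ fun σ _ => hmem σ)
  · intro i
    rw [finrank_Asub]
    have h := finrank_range_gmap_invol K L h2 (hτord i)
    rw [hn] at h
    obtain ⟨t, ht⟩ := hneven
    omega
  · intro i B hB hBne x hx
    rw [Asub_eq] at hB
    obtain ⟨f, ⟨b, rfl⟩, rfl⟩ := hB
    have hphi : Theta K L (gmap K L (τs i) b) = Bf K L (b + τs i b) (τs i) := by
      rw [← phi_eq_Theta, phi_eq_Bf_add_flip, Bf_flip, tau_inv K L (hτord i),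
        ← BfL_apply, ← BfL_apply, ← BfL_apply, ← map_add]
    set c := b + τs i b with hc
    have hc0 : c ≠ 0 := by
      intro h
      apply hBne
      rw [hphi, h, ← BfL_apply, map_zero]
    apply (traceForm_nondegenerate K L).1 x
    intro z
    have hz := hx ((τs i)⁻¹ (c⁻¹ * z))
    rw [hphi] at hz
    rw [Bf_apply, algequiv_apply_inv] at hz
    rw [Algebra.traceForm_apply, ← hz]
    congr 1
    field_simp
  · intro j
    rw [finrank_Asub]
    by_cases hj : j = 0
    · subst hj
      rw [hσ0, LinearMap.finrank_range_of_inj (gmap_injective_one K L h2)]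
      exact hn
    · rw [LinearMap.finrank_range_of_inj (gmap_injective_noninv K L (hσnoninv j hj))]
      exact hn
end
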